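/- Let G be a non-trivial finitely generated group. Then the regular wreath product G ≀ ℤ is finitely invariably generated. In particular, every finitely generated group embeds into a finitely invariably generated group. -/

import Mathlib

open Function SemidirectProduct

/-- A subset `S` invariably generates `K` if replacing each element of `S` by an
arbitrary conjugate always yields a generating set of `K`. -/
def InvariablyGenerates (K : Type*) [Group K] (S : Set K) : Prop :=
  ∀ a : K → K, Subgroup.closure ((fun s => (a s)⁻¹ * s * a s) '' S) = ⊤

/-- `K` is invariably generated if `K` invariably generates itself. -/
def IsIG (K : Type*) [Group K] : Prop :=
  InvariablyGenerates K Set.univ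

/-- `K` is finitely invariably generated if some finite subset invariably generates it. -/
def IsFIG (K : Type*) [Group K] : Prop :=
  ∃ S : Set K, S.Finite ∧ InvariablyGenerates K S

/-- The base of the wreath product `G ≀_X H`: the restricted direct product
`⨁_{x ∈ X} G`, realized as the finitely supported functions `X → G`. -/
def WreathBase (G X : Type*) [Group G] : Subgroup (X → G) where
  carrier := {f | (mulSupport f).Finite}
  one_mem' := by simp
  mul_mem' {f g} hf hg := (Set.Finite.union hf hg).subset (mulSupport_mul f g)
  inv_mem' {f} hf := by simpa using hf

lemma mem_wreathBase {G X : Type*} [Group G] {f : X → G} :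
    f ∈ WreathBase G X ↔ (mulSupport f).Finite := Iff.rfl

/-- The permutation action of `H` on the base, `(h • f) x = f (h⁻¹ • x)`, so that in the
wreath product conjugation by `h` (i.e. `h · g^{(x)} · h⁻¹`) sends the coordinate subgroup
`G_x` to `G_{h • x}`; equivalently `h⁻¹ · g^{(x)} · h = g^{(h⁻¹ • x)}`, which is the
left-action rendering of "conjugation multiplies indices on the right". -/
def wreathAut (G H X : Type*) [Group G] [Group H] [MulAction H X] :
    H →* MulAut (WreathBase G X) where
  toFun h :=
    { toFun := fun f => ⟨fun x => (f : X → G) (h⁻¹ • x),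
        mem_wreathBase.mpr (((mem_wreathBase.mp f.2).image (h • ·)).subset
          fun x hx => ⟨h⁻¹ • x, hx, by simp⟩)⟩
      invFun := fun f => ⟨fun x => (f : X → G) (h • x),
        mem_wreathBase.mpr (((mem_wreathBase.mp f.2).image (h⁻¹ • ·)).subset
          fun x hx => ⟨h • x, hx, by simp⟩)⟩
      left_inv := fun f => Subtype.ext (funext fun x => by simp)
      right_inv := fun f => Subtype.ext (funext fun x => by simp)
      map_mul' := fun f g => Subtype.ext (funext fun x => by simp) }
  map_one' := by
    ext f x
    simp
  map_mul' h₁ h₂ := by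
    ext f x
    simp [mul_smul]

/-- The restricted wreath product `G ≀_X H`. -/
abbrev WreathProduct (G H X : Type*) [Group G] [Group H] [MulAction H X] :=
  WreathBase G X ⋊[wreathAut G H X] H

open scoped Classical in
/-- `g^{(y)}`: the element of the base which is `g` in coordinate `y` and trivial elsewhere. -/
noncomputable def WreathBase.single {G : Type*} (X : Type*) [Group G] (y : X) :
    G →* WreathBase G X where
  toFun g := ⟨fun x => if x = y then g else 1,
    mem_wreathBase.mpr ((Set.finite_singleton y).subset fun x hx => by
      by_contra hxy
      exact hx (if_neg hxy))⟩
  map_one' := Subtype.ext (funext fun x => by simp)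
  map_mul' g₁ g₂ := Subtype.ext (funext fun x => by by_cases h : x = y <;> simp [h])

/-- The embedding of `G` onto the coordinate subgroup `G_y` of the wreath product. -/
noncomputable def coordHom (G H : Type*) {X : Type*} [Group G] [Group H] [MulAction H X]
    (y : X) : G →* WreathProduct G H X :=
  SemidirectProduct.inl.comp (WreathBase.single X y)

/-- `H_X` is of torsion-type if there is `y ∈ X` such that for every `x` in the `H`-orbit
of `y` and every `k ∈ H`, the `⟨k⟩`-orbit of `x` is finite. -/
def IsTorsionType (H X : Type*) [Group H] [MulAction H X] : Prop :=
  ∃ y : X, ∀ x ∈ MulAction.orbit H y, ∀ k : H, (Set.range fun n : ℤ => k ^ n • x).Finite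

/-- A `Γ_z`-set: a set of base elements containing, for every `g ∈ G`, an element whose
coordinate at `z` is `g`. -/
def IsGammaSet {G X : Type*} [Group G] (z : X) (Γ : Set (WreathBase G X)) : Prop :=
  ∀ g : G, ∃ f ∈ Γ, (f : X → G) z = g

/-- The action of `H` on the base `⨁_{h ∈ H} G` of the regular wreath product `G ≀ H`,
given by right multiplication on the index set: `(φ h f) x = f (x * h)`, so that
`h⁻¹ · g^{(x)} · h = g^{(x · h)}`. -/
def regularWreathAut (G H : Type*) [Group G] [Group H] : H →* MulAut (WreathBase G H) where
  toFun h :=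
    { toFun := fun f => ⟨fun x => (f : H → G) (x * h),
        mem_wreathBase.mpr (((mem_wreathBase.mp f.2).image (· * h⁻¹)).subset
          fun x hx => ⟨x * h, hx, by simp⟩)⟩
      invFun := fun f => ⟨fun x => (f : H → G) (x * h⁻¹),
        mem_wreathBase.mpr (((mem_wreathBase.mp f.2).image (· * h)).subset
          fun x hx => ⟨x * h⁻¹, hx, by simp⟩)⟩
      left_inv := fun f => Subtype.ext (funext fun x => by simp)
      right_inv := fun f => Subtype.ext (funext fun x => by simp)
      map_mul' := fun f g => Subtype.ext (funext fun x => by simp) }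
  map_one' := by
    ext f x
    simp
  map_mul' h₁ h₂ := by
    ext f x
    simp [mul_assoc]

/-- The regular wreath product `G ≀ H`: the base is `⨁_{h ∈ H} G` and `H` acts by
permuting coordinates via right multiplication on the index set `H`. -/
abbrev RegularWreath (G H : Type*) [Group G] [Group H] :=
  WreathBase G H ⋊[regularWreathAut G H] H
namespace StmtAux

open Multiplicative SemidirectProduct Function

open scoped Classical

universe u

variable {G : Type u} [Group G]

local notation "M" => Multiplicative ℤ
local notation "WW" => RegularWreath G (Multiplicative ℤ)
local notation "BB" => WreathBase G (Multiplicative ℤ)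

noncomputable def sg (y : Multiplicative ℤ) (g : G) : WreathBase G (Multiplicative ℤ) :=
  WreathBase.single (Multiplicative ℤ) y g

lemma sg_apply (y : M) (g : G) (x : M) :
    ((sg y g : BB) : M → G) x = if x = y then g else 1 := by
  by_cases h : x = y <;> simp [sg, WreathBase.single, h]

lemma meq {x y : M} : x = y ↔ toAdd x = toAdd y :=
  ⟨fun h => h ▸ rfl, fun h => Multiplicative.toAdd.injective h⟩

lemma phi_apply (h : M) (f : BB) (x : M) :
    ((regularWreathAut G (Multiplicative ℤ) h f : BB) : M → G) x = (f : M → G) (x * h) := rfl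

lemma phi_inv_apply (h : M) (f : BB) (x : M) :
    ((((regularWreathAut G (Multiplicative ℤ) h)⁻¹ f : BB)) : M → G) x = (f : M → G) (x * h⁻¹) := rfl

lemma conj_right (aw w : WW) : (aw⁻¹ * w * aw).right = w.right := by
  simp only [mul_right, inv_right]
  rw [mul_comm aw.right⁻¹ w.right, mul_assoc, inv_mul_cancel, mul_one]

lemma conj_left_apply (aw w : WW) (x : M) :
    (((aw⁻¹ * w * aw).left : BB) : M → G) x =
      ((aw.left : M → G) (x * aw.right⁻¹))⁻¹ * ((w.left : BB) : M → G) (x * aw.right⁻¹)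
        * ((aw.left : BB) : M → G) (x * (aw.right⁻¹ * w.right)) := by
  have hs : ∀ (h : M) (f : BB) (y : M),
      ((((regularWreathAut G (Multiplicative ℤ) h).symm f : BB)) : M → G) y = (f : M → G) (y * h⁻¹) :=
    fun _ _ _ => rfl
  simp [mul_left, inv_left, phi_apply, phi_inv_apply, hs, mul_assoc]

lemma right_pow (w : WW) (n : ℕ) : (w ^ n).right = w.right ^ n := by
  have := map_pow (rightHom : WW →* M) w n
  simpa [rightHom_eq_right] using this

lemma right_zpow (w : WW) (n : ℤ) : (w ^ n).right = w.right ^ n := by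
  have := map_zpow (rightHom : WW →* M) w n
  simpa [rightHom_eq_right] using this

lemma inl_left_of_right_one {w : WW} (h : w.right = 1) : inl w.left = w := by
  ext <;> simp [h]

end StmtAux
namespace StmtAux

variable {G : Type u} [Group G]

open Multiplicative SemidirectProduct Function
open scoped Classical

local notation "M" => Multiplicative ℤ
local notation "WW" => RegularWreath G (Multiplicative ℤ)
local notation "BB" => WreathBase G (Multiplicative ℤ)

/-- The element `g^{(1)} t` of the wreath product. -/
noncomputable def s2 (g : G) : RegularWreath G (Multiplicative ℤ) :=
  ⟨sg 1 g, ofAdd 1⟩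

lemma s2_right (g : G) : (s2 g).right = ofAdd (1 : ℤ) := rfl

lemma s2_left (g : G) : (s2 g).left = sg 1 g := rfl

lemma s2_pow_right (g : G) (n : ℕ) : ((s2 g) ^ n).right = ofAdd (n : ℤ) := by
  rw [right_pow, s2_right, meq]
  simp

lemma s2_pow_left (g : G) (n : ℕ) (x : M) :
    ((((s2 g) ^ n).left : BB) : M → G) x =
      if -(n : ℤ) < toAdd x ∧ toAdd x ≤ 0 then g else 1 := by
  induction n with
  | zero =>
    rw [pow_zero, if_neg (by omega)]
    rfl
  | succ n ih =>
    rw [pow_succ, mul_left, Subgroup.coe_mul, Pi.mul_apply, ih, s2_pow_right, s2_left,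
      phi_apply, sg_apply]
    have hx : (x * ofAdd (n : ℤ) = 1) ↔ toAdd x = -(n : ℤ) := by
      rw [meq]; simp; omega
    by_cases hv : toAdd x = -(n : ℤ)
    · rw [if_neg (by omega), if_pos (hx.2 hv), if_pos (by omega), one_mul]
    · rw [if_neg (fun hc => hv (hx.1 hc)), mul_one]
      exact if_congr (by omega) rfl rfl

lemma mul_inv_left_of_right_eq {p q : WW} (h : p.right = q.right) :
    ((p * q⁻¹).left : BB) = p.left * (q.left)⁻¹ := by
  apply Subtype.ext
  funext x
  simp [mul_left, inv_left, phi_apply, phi_inv_apply, h]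

lemma mul_inv_right_of_right_eq {p q : WW} (h : p.right = q.right) :
    (p * q⁻¹).right = 1 := by
  simp [h]

lemma exists_bound (w : WW) :
    ∃ N : ℕ, (∀ x : ℤ, (N : ℤ) < |x| → ((w.left : BB) : M → G) (ofAdd x) = 1) ∧
      (toAdd w.right).natAbs ≤ N := by
  have hfin : (Function.mulSupport ((w.left : BB) : M → G)).Finite := mem_wreathBase.mp w.left.2
  refine ⟨(hfin.toFinset.image fun m => (toAdd m).natAbs).sup id ⊔ (toAdd w.right).natAbs,
    ?_, le_max_right _ _⟩
  intro x hx
  by_contra h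
  have hmem : ofAdd x ∈ hfin.toFinset := by
    rw [Set.Finite.mem_toFinset]
    exact h
  have hle : (toAdd (ofAdd x)).natAbs ≤ (hfin.toFinset.image fun m => (toAdd m).natAbs).sup id :=
    Finset.le_sup (f := id) (Finset.mem_image_of_mem _ hmem)
  simp only [toAdd_ofAdd] at hle
  have : x.natAbs ≤ (hfin.toFinset.image fun m => (toAdd m).natAbs).sup id ⊔ (toAdd w.right).natAbs :=
    le_trans hle (le_max_left _ _)
  rw [Int.abs_eq_natAbs] at hx
  omega

lemma conj_single (aw : WW) (y : M) (q : G) :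
    aw⁻¹ * inl (sg y q) * aw =
      inl (sg (y * aw.right) ((((aw.left : BB) : M → G) y)⁻¹ * q * ((aw.left : BB) : M → G) y)) := by
  have hr : (aw⁻¹ * inl (sg y q) * aw).right = 1 := by
    rw [conj_right, right_inl]
  ext1
  swap
  · rw [hr, right_inl]
  rw [left_inl]
  apply Subtype.ext
  funext x
  rw [conj_left_apply, left_inl, right_inl, mul_one, sg_apply, sg_apply]
  by_cases hx : x * aw.right⁻¹ = y
  · have hx2 : x = y * aw.right := by
      rw [meq] at hx ⊢; simp at hx ⊢; omega
    rw [if_pos hx, if_pos hx2, hx]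
  · have hx2 : ¬(x = y * aw.right) := by
      intro hc; apply hx; rw [meq] at hc ⊢; simp at hc ⊢; omega
    rw [if_neg hx, if_neg hx2, mul_one, inv_mul_cancel]

end StmtAux
namespace StmtAux

open Multiplicative SemidirectProduct Function
open scoped Classical

theorem main (G : Type u) [Group G] (hG : Group.FG G) :
    IsFIG (RegularWreath G (Multiplicative ℤ)) := by
  obtain ⟨Tset, hTclos, hTfin⟩ := Group.fg_iff.mp hG
  set T : Finset G := hTfin.toFinset with hTdef
  have hT : Subgroup.closure (↑T : Set G) = ⊤ := by
    rw [hTdef, Set.Finite.coe_toFinset]; exact hTclos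
  set t : Multiplicative ℤ := ofAdd 1 with ht
  set s0 : RegularWreath G (Multiplicative ℤ) := inr t with hs0
  set S : Set (RegularWreath G (Multiplicative ℤ)) :=
    ((fun g => (inl (sg 1 g) : RegularWreath G (Multiplicative ℤ))) '' ↑T) ∪
      ((fun g => s2 g) '' ↑T) ∪ {s0} with hS
  refine ⟨S, ?_, ?_⟩
  · rw [hS]
    exact ((T.finite_toSet.image _).union (T.finite_toSet.image _)).union
      (Set.finite_singleton _)
  intro a
  set H := Subgroup.closure ((fun s => (a s)⁻¹ * s * a s) '' S) with hH
  have hmem : ∀ s ∈ S, (a s)⁻¹ * s * a s ∈ H := fun s hs =>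
    Subgroup.subset_closure ⟨s, hs, rfl⟩
  have hs0S : s0 ∈ S := by rw [hS]; exact Set.mem_union_right _ rfl
  have hs2S : ∀ g ∈ T, s2 g ∈ S := fun g hg => by
    rw [hS]; exact Set.mem_union_left _ (Set.mem_union_right _ ⟨g, hg, rfl⟩)
  have hs1S : ∀ g ∈ T, (inl (sg 1 g) : RegularWreath G (Multiplicative ℤ)) ∈ S := fun g hg => by
    rw [hS]; exact Set.mem_union_left _ (Set.mem_union_left _ ⟨g, hg, rfl⟩)
  set Nf : RegularWreath G (Multiplicative ℤ) → ℕ := fun w => (exists_bound w).choose with hNfdef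
  have hNf : ∀ w : RegularWreath G (Multiplicative ℤ),
      (∀ x : ℤ, ((Nf w : ℕ) : ℤ) < |x| →
        ((w.left : WreathBase G (Multiplicative ℤ)) : Multiplicative ℤ → G) (ofAdd x) = 1) ∧
        (toAdd w.right).natAbs ≤ Nf w := fun w => (exists_bound w).choose_spec
  set N : ℕ := Nf (a s0) ⊔ T.sup (fun g => Nf (a (inl (sg 1 g))) ⊔ Nf (a (s2 g))) with hN
  have key_bound : ∀ s : RegularWreath G (Multiplicative ℤ), Nf s ≤ N →
      (∀ x : ℤ, ((N : ℕ) : ℤ) < |x| →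
        ((s.left : WreathBase G (Multiplicative ℤ)) : Multiplicative ℤ → G) (ofAdd x) = 1) ∧
        (toAdd s.right).natAbs ≤ N := by
    intro s hs
    obtain ⟨h1, h2⟩ := hNf s
    exact ⟨fun x hx => h1 x (lt_of_le_of_lt (by exact_mod_cast hs) hx), le_trans h2 hs⟩
  have hble : ∀ g ∈ T, Nf (a (inl (sg 1 g))) ≤ N ∧ Nf (a (s2 g)) ≤ N := by
    intro g hg
    rw [hN]
    constructor
    · calc Nf (a (inl (sg 1 g))) ≤ Nf (a (inl (sg 1 g))) ⊔ Nf (a (s2 g)) := le_sup_left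
        _ ≤ T.sup (fun g => Nf (a (inl (sg 1 g))) ⊔ Nf (a (s2 g))) := Finset.le_sup (f := fun g => Nf (a (inl (sg 1 g))) ⊔ Nf (a (s2 g))) hg
        _ ≤ Nf (a s0) ⊔ T.sup (fun g => Nf (a (inl (sg 1 g))) ⊔ Nf (a (s2 g))) := le_sup_right
    · calc Nf (a (s2 g)) ≤ Nf (a (inl (sg 1 g))) ⊔ Nf (a (s2 g)) := le_sup_right
        _ ≤ T.sup (fun g => Nf (a (inl (sg 1 g))) ⊔ Nf (a (s2 g))) := Finset.le_sup (f := fun g => Nf (a (inl (sg 1 g))) ⊔ Nf (a (s2 g))) hg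
        _ ≤ Nf (a s0) ⊔ T.sup (fun g => Nf (a (inl (sg 1 g))) ⊔ Nf (a (s2 g))) := le_sup_right
  set ζ : ℤ := -(2 * (N : ℤ) + 1) with hζ
  set z : Multiplicative ℤ := ofAdd ζ with hz
  set u0 : RegularWreath G (Multiplicative ℤ) := (a s0)⁻¹ * s0 * a s0 with hu0def
  have hu0H : u0 ∈ H := hmem s0 hs0S
  have hu0r : u0.right = t := by rw [hu0def, conj_right, hs0, right_inr]
  have hu0zr : ∀ m : ℤ, (u0 ^ m).right = ofAdd m := by
    intro m
    rw [right_zpow, hu0r, meq, ht]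
    simp
  -- the Γ_z elements
  have hkey : ∀ g ∈ T, ∃ b : WreathBase G (Multiplicative ℤ),
      (inl b : RegularWreath G (Multiplicative ℤ)) ∈ H ∧ (b : Multiplicative ℤ → G) z = g := by
    intro g hg
    obtain ⟨hc2, hk2⟩ := key_bound _ (hble g hg).2
    obtain ⟨hc0, hk0⟩ := key_bound _ (by rw [hN]; exact le_sup_left : Nf (a s0) ≤ N)
    set n : ℕ := 4 * N + 2 with hn
    set u2 := (a (s2 g))⁻¹ * s2 g * a (s2 g) with hu2def
    have hu2H : u2 ∈ H := hmem _ (hs2S g hg)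
    have hu2n : u2 ^ n = (a (s2 g))⁻¹ * (s2 g) ^ n * a (s2 g) := by
      rw [hu2def]
      have := conj_pow (i := n) (a := (a (s2 g))⁻¹) (b := s2 g)
      rwa [inv_inv] at this
    have hu0n : u0 ^ n = (a s0)⁻¹ * s0 ^ n * a s0 := by
      rw [hu0def]
      have := conj_pow (i := n) (a := (a s0)⁻¹) (b := s0)
      rwa [inv_inv] at this
    have hr2 : (u2 ^ n).right = ofAdd (n : ℤ) := by
      rw [hu2n, conj_right]; exact s2_pow_right g n
    have hr0 : (u0 ^ n).right = ofAdd (n : ℤ) := by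
      rw [hu0n, conj_right, hs0, ← map_pow, right_inr, meq, ht]
      simp
    have hk2' : -(N:ℤ) ≤ toAdd (a (s2 g)).right ∧ toAdd (a (s2 g)).right ≤ (N:ℤ) := by omega
    have hk0' : -(N:ℤ) ≤ toAdd (a s0).right ∧ toAdd (a s0).right ≤ (N:ℤ) := by omega
    set w := u2 ^ n * (u0 ^ n)⁻¹ with hw
    have hwH : w ∈ H := mul_mem (pow_mem hu2H n) (inv_mem (pow_mem hu0H n))
    have hwr : w.right = 1 := mul_inv_right_of_right_eq (by rw [hr2, hr0])
    refine ⟨w.left, by rwa [inl_left_of_right_one hwr], ?_⟩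
    have hA : (((u2 ^ n).left : WreathBase G (Multiplicative ℤ)) : Multiplicative ℤ → G) z = g := by
      rw [hu2n, conj_left_apply]
      have e1 : z * (a (s2 g)).right⁻¹ = ofAdd (ζ - toAdd (a (s2 g)).right) := by
        rw [meq]; simp [hz]; omega
      have e2 : z * ((a (s2 g)).right⁻¹ * ((s2 g) ^ n).right)
          = ofAdd (ζ - toAdd (a (s2 g)).right + n) := by
        rw [s2_pow_right, meq]; simp [hz]; omega
      rw [e1, e2, hc2 _ (lt_abs.mpr (Or.inr (by omega))), hc2 _ (lt_abs.mpr (Or.inl (by omega))),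
        s2_pow_left, if_pos (by simp; omega)]
      simp
    have hA0 : (((u0 ^ n).left : WreathBase G (Multiplicative ℤ)) : Multiplicative ℤ → G) z = 1 := by
      rw [hu0n, conj_left_apply]
      have e1 : z * (a s0).right⁻¹ = ofAdd (ζ - toAdd (a s0).right) := by
        rw [meq]; simp [hz]; omega
      have e2 : z * ((a s0).right⁻¹ * (s0 ^ n).right)
          = ofAdd (ζ - toAdd (a s0).right + n) := by
        rw [hs0, ← map_pow, right_inr, meq, ht]; simp [hz]; omega
      have e3 : (((s0 ^ n).left : WreathBase G (Multiplicative ℤ)) : Multiplicative ℤ → G)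
          (ofAdd (ζ - toAdd (a s0).right)) = 1 := by
        rw [hs0, ← map_pow, left_inr]
        simp
      rw [e1, e2, e3, hc0 _ (lt_abs.mpr (Or.inr (by omega))), hc0 _ (lt_abs.mpr (Or.inl (by omega)))]
      simp
    rw [hw, mul_inv_left_of_right_eq (by rw [hr2, hr0]), Subgroup.coe_mul, Pi.mul_apply,
      InvMemClass.coe_inv, Pi.inv_apply, hA, hA0]
    simp
  -- coordinate-z values of H ∩ B form all of G
  have hV : ∀ v : G, ∃ b : WreathBase G (Multiplicative ℤ),
      (inl b : RegularWreath G (Multiplicative ℤ)) ∈ H ∧ (b : Multiplicative ℤ → G) z = v := by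
    set evz : WreathBase G (Multiplicative ℤ) →* G :=
      (Pi.evalMonoidHom (fun _ : Multiplicative ℤ => G) z).comp
        (WreathBase G (Multiplicative ℤ)).subtype with hevz
    set V : Subgroup G := Subgroup.map evz
      (H.comap (inl : WreathBase G (Multiplicative ℤ) →* RegularWreath G (Multiplicative ℤ)))
      with hVdef
    have hsub : Subgroup.closure (↑T : Set G) ≤ V := by
      rw [Subgroup.closure_le]
      intro g hg
      obtain ⟨b, hbH, hbz⟩ := hkey g hg
      exact ⟨b, hbH, hbz⟩
    intro v
    have hv : v ∈ V := by rw [hT] at hsub; exact hsub (Subgroup.mem_top v)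
    obtain ⟨b, hbH, hbz⟩ := hv
    exact ⟨b, hbH, hbz⟩
  -- moving singles around
  have hmove : ∀ y y' : Multiplicative ℤ, ∃ e : G, ∀ q : G,
      (inl (sg y q) : RegularWreath G (Multiplicative ℤ)) ∈ H →
      (inl (sg y' (e⁻¹ * q * e)) : RegularWreath G (Multiplicative ℤ)) ∈ H := by
    intro y y'
    set aw := u0 ^ (toAdd y' - toAdd y) with haw
    have hawH : aw ∈ H := Subgroup.zpow_mem H hu0H _
    refine ⟨((aw.left : WreathBase G (Multiplicative ℤ)) : Multiplicative ℤ → G) y,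
      fun q hq => ?_⟩
    have h2 : aw⁻¹ * inl (sg y q) * aw ∈ H := mul_mem (mul_mem (inv_mem hawH) hq) hawH
    rw [conj_single] at h2
    have hy' : y * aw.right = y' := by rw [haw, hu0zr, meq]; simp
    rwa [hy'] at h2
  -- seeds
  have hseed : ∀ g ∈ T, ∃ (y : Multiplicative ℤ) (e : G),
      (inl (sg y (e⁻¹ * g * e)) : RegularWreath G (Multiplicative ℤ)) ∈ H := by
    intro g hg
    have h1 := hmem _ (hs1S g hg)
    rw [conj_single (a (inl (sg 1 g))) 1 g] at h1
    exact ⟨_, _, h1⟩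
  -- conjugating singles at z by base elements of H
  have hUnorm : ∀ (v q : G),
      (inl (sg z q) : RegularWreath G (Multiplicative ℤ)) ∈ H →
      (inl (sg z (v * q * v⁻¹)) : RegularWreath G (Multiplicative ℤ)) ∈ H := by
    intro v q hq
    obtain ⟨b, hbH, hbz⟩ := hV v
    have h2 : (inl (b * sg z q * b⁻¹) : RegularWreath G (Multiplicative ℤ)) ∈ H := by
      rw [map_mul, map_mul, map_inv]
      exact mul_mem (mul_mem hbH hq) (inv_mem hbH)
    have heq : b * sg z q * b⁻¹ = sg z (v * q * v⁻¹) := by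
      apply Subtype.ext; funext x
      rw [Subgroup.coe_mul, Subgroup.coe_mul, Pi.mul_apply, Pi.mul_apply,
        InvMemClass.coe_inv, Pi.inv_apply, sg_apply, sg_apply]
      by_cases hx : x = z
      · rw [if_pos hx, if_pos hx, hx, hbz]
      · rw [if_neg hx, if_neg hx, mul_one, mul_inv_cancel]
    rwa [heq] at h2
  -- all singles at z
  have hUtop : ∀ q : G, (inl (sg z q) : RegularWreath G (Multiplicative ℤ)) ∈ H := by
    set U : Subgroup G := Subgroup.comap
      ((inl : WreathBase G (Multiplicative ℤ) →* RegularWreath G (Multiplicative ℤ)).comp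
        (WreathBase.single (Multiplicative ℤ) z)) H with hU
    have hTU : (↑T : Set G) ⊆ ↑U := by
      intro g hg
      obtain ⟨y, e, hy⟩ := hseed g hg
      obtain ⟨e', he'⟩ := hmove y z
      have h2 := he' _ hy
      have h3 : e'⁻¹ * (e⁻¹ * g * e) * e' = (e * e')⁻¹ * g * (e * e') := by group
      rw [h3] at h2
      have h4 := hUnorm (e * e') _ h2
      have h5 : (e * e') * ((e * e')⁻¹ * g * (e * e')) * (e * e')⁻¹ = g := by group
      rw [h5] at h4
      exact h4
    have hle : Subgroup.closure (↑T : Set G) ≤ U := (Subgroup.closure_le _).mpr hTU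
    rw [hT] at hle
    intro q
    exact hle (Subgroup.mem_top q)
  -- all singles anywhere
  have hallsg : ∀ (y : Multiplicative ℤ) (q : G),
      (inl (sg y q) : RegularWreath G (Multiplicative ℤ)) ∈ H := by
    intro y q
    obtain ⟨e, he⟩ := hmove z y
    have h2 := he (e * q * e⁻¹) (hUtop _)
    have h3 : e⁻¹ * (e * q * e⁻¹) * e = q := by group
    rwa [h3] at h2
  -- the whole base
  have hB : ∀ b : WreathBase G (Multiplicative ℤ),
      (inl b : RegularWreath G (Multiplicative ℤ)) ∈ H := by
    have general : ∀ (F : Finset (Multiplicative ℤ)) (b : WreathBase G (Multiplicative ℤ)),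
        Function.mulSupport ((b : WreathBase G (Multiplicative ℤ)) : Multiplicative ℤ → G) ⊆ ↑F →
        (inl b : RegularWreath G (Multiplicative ℤ)) ∈ H := by
      intro F
      induction F using Finset.induction_on with
      | empty =>
        intro b hb
        have hb1 : b = 1 := by
          apply Subtype.ext; funext x
          have hx : ((b : WreathBase G (Multiplicative ℤ)) : Multiplicative ℤ → G) x = 1 := by
            by_contra hx
            simpa using hb (Function.mem_mulSupport.mpr hx)
          simpa using hx
        rw [hb1, map_one]
        exact one_mem H
      | @insert y F hyF ih =>
        intro b hb
        set q := ((b : WreathBase G (Multiplicative ℤ)) : Multiplicative ℤ → G) y with hq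
        have hb' : Function.mulSupport
            (((sg y q)⁻¹ * b : WreathBase G (Multiplicative ℤ)) : Multiplicative ℤ → G) ⊆ ↑F := by
          intro x hx
          rw [Function.mem_mulSupport, Subgroup.coe_mul, Pi.mul_apply, InvMemClass.coe_inv,
            Pi.inv_apply, sg_apply] at hx
          by_cases hxy : x = y
          · exfalso; apply hx; rw [if_pos hxy, hxy, ← hq, inv_mul_cancel]
          · rw [if_neg hxy, inv_one, one_mul] at hx
            have hxs := hb (Function.mem_mulSupport.mpr hx)
            simp only [Finset.coe_insert, Set.mem_insert_iff] at hxs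
            rcases hxs with h | h
            · exact absurd h hxy
            · exact h
        have hbeq : b = sg y q * ((sg y q)⁻¹ * b) := by rw [mul_inv_cancel_left]
        rw [hbeq, map_mul]
        exact mul_mem (hallsg y q) (ih _ hb')
    intro b
    exact general (mem_wreathBase.mp b.2).toFinset b (by simp)
  -- conclude
  rw [Subgroup.eq_top_iff']
  intro w
  have h1 : u0 ^ (toAdd w.right) ∈ H := Subgroup.zpow_mem H hu0H _
  have hr : (u0 ^ (toAdd w.right)).right = w.right := by rw [hu0zr]; simp
  have h2 : w * (u0 ^ (toAdd w.right))⁻¹ ∈ H := by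
    have h3 := hB (w * (u0 ^ (toAdd w.right))⁻¹).left
    rwa [inl_left_of_right_one (mul_inv_right_of_right_eq hr.symm)] at h3
  have h4 := mul_mem h2 h1
  rwa [inv_mul_cancel_right] at h4

end StmtAux
lemma single_injective {G : Type u} [Group G] (y : Multiplicative ℤ) :
    Function.Injective (WreathBase.single (G := G) (Multiplicative ℤ) y) := by
  intro q q' h
  have h2 := congrFun (congrArg Subtype.val h) y
  have e1 : ((WreathBase.single (G := G) (Multiplicative ℤ) y q :
      WreathBase G (Multiplicative ℤ)) : Multiplicative ℤ → G) y = q := by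
    simp [WreathBase.single]
  have e2 : ((WreathBase.single (G := G) (Multiplicative ℤ) y q' :
      WreathBase G (Multiplicative ℤ)) : Multiplicative ℤ → G) y = q' := by
    simp [WreathBase.single]
  rw [← e1, ← e2]
  exact h2

theorem stmt_5.{u} (G : Type u) [Group G] [Nontrivial G] (hG : Group.FG G) :
    IsFIG (RegularWreath G (Multiplicative ℤ)) ∧
      ∀ (K : Type u) [Group K], Group.FG K →
        ∃ (L : Type u) (_ : Group L), IsFIG L ∧ ∃ f : K →* L, Function.Injective f := by
  refine ⟨StmtAux.main G hG, fun K _ hK => ⟨RegularWreath K (Multiplicative ℤ), inferInstance,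
    StmtAux.main K hK, SemidirectProduct.inl.comp (WreathBase.single (Multiplicative ℤ) 1), ?_⟩⟩
  exact SemidirectProduct.inl_injective.comp (single_injective 1)
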